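/- arXiv:2105.06962 — 2 statements merged into one kernel-verified Lean document; each statement's English description precedes it below -/
import Mathlib

section
/- For every prime number ℓ and every unit a of ℤ_ℓ, the quotient ring ℤ_ℓ⟦X⟧ / (ℓ + a·X) is isomorphic, as a ring, to ℤ_ℓ. -/
/-- For every prime number ℓ and every unit `a` of ℤ_ℓ, the quotient ring
ℤ_ℓ⟦X⟧ / (ℓ + a·X) is isomorphic, as a ring, to ℤ_ℓ. -/
theorem quotient_span_ell_add_aX_iso_padicInt (ℓ : ℕ) [Fact (Nat.Prime ℓ)]
    (a : ℤ_[ℓ]) (ha : IsUnit a) :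
    Nonempty ((PowerSeries ℤ_[ℓ] ⧸ Ideal.span {(ℓ : PowerSeries ℤ_[ℓ]) +
      PowerSeries.C a * PowerSeries.X}) ≃+* ℤ_[ℓ]) := by
  set p : PowerSeries ℤ_[ℓ] := (ℓ : PowerSeries ℤ_[ℓ]) + PowerSeries.C a * PowerSeries.X
  set I : Ideal (PowerSeries ℤ_[ℓ]) := Ideal.span {p}
  obtain ⟨u, hu⟩ := ha
  set b : ℤ_[ℓ] := (↑u⁻¹ : ℤ_[ℓ])
  have hab : a * b = 1 := by rw [← hu]; exact_mod_cast u.mul_inv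
  set c : ℤ_[ℓ] := -(b * ℓ)
  have hac : a * c = -(ℓ : ℤ_[ℓ]) := by
    simp only [c, mul_neg, ← mul_assoc, hab, one_mul]
  have hcnorm : ‖c‖ < 1 := by
    have hb : ‖b‖ ≤ 1 := b.2
    have : ‖c‖ = ‖b‖ * ‖(ℓ : ℤ_[ℓ])‖ := by rw [norm_neg, norm_mul]
    rw [this, PadicInt.norm_p]
    have hℓ : (1:ℝ) < (ℓ:ℝ) := by exact_mod_cast (Fact.out : Nat.Prime ℓ).one_lt
    calc ‖b‖ * (ℓ:ℝ)⁻¹ ≤ 1 * (ℓ:ℝ)⁻¹ := by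
          apply mul_le_mul_of_nonneg_right hb (by positivity)
      _ < 1 := by rw [one_mul]; exact inv_lt_one_of_one_lt₀ hℓ
  have hc0 : (0:ℝ) ≤ ‖c‖ := norm_nonneg _
  -- coefficient description of p * g
  have coeff_p_mul : ∀ (g : PowerSeries ℤ_[ℓ]) (n : ℕ),
      (PowerSeries.coeff (n+1)) (p * g) =
        ℓ * (PowerSeries.coeff (n+1)) g + a * (PowerSeries.coeff n) g := by
    intro g n
    have hℓC : (ℓ : PowerSeries ℤ_[ℓ]) = PowerSeries.C (ℓ:ℤ_[ℓ]) :=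
      (map_natCast (PowerSeries.C) ℓ).symm
    simp only [p, hℓC, add_mul, map_add, mul_assoc, PowerSeries.coeff_C_mul,
      PowerSeries.coeff_succ_X_mul]
  have coeff_p_mul0 : ∀ (g : PowerSeries ℤ_[ℓ]),
      (PowerSeries.coeff 0) (p * g) = ℓ * (PowerSeries.coeff 0) g := by
    intro g
    have hℓC : (ℓ : PowerSeries ℤ_[ℓ]) = PowerSeries.C (ℓ:ℤ_[ℓ]) :=
      (map_natCast (PowerSeries.C) ℓ).symm
    simp only [p, hℓC, add_mul, map_add, mul_assoc, PowerSeries.coeff_C_mul,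
      PowerSeries.coeff_zero_eq_constantCoeff, map_mul, PowerSeries.constantCoeff_X,
      mul_zero, add_zero, zero_mul]
  -- the ring hom ℤ_ℓ → quotient
  set ψ : ℤ_[ℓ] →+* (PowerSeries ℤ_[ℓ] ⧸ I) :=
    (Ideal.Quotient.mk I).comp (PowerSeries.C)
  have hinj : Function.Injective ψ := by
    rw [injective_iff_map_eq_zero]
    intro x hx
    have hx' : (PowerSeries.C x) ∈ I := by
      rwa [← Ideal.Quotient.eq_zero_iff_mem]
    simp only [I, Ideal.mem_span_singleton] at hx'
    obtain ⟨g, hg⟩ := hx'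
    -- coefficients: x = ℓ g 0, 0 = ℓ g (n+1) + a g n
    have h0 : x = ℓ * (PowerSeries.coeff 0) g := by
      have := congrArg (PowerSeries.coeff 0) hg
      rwa [PowerSeries.coeff_zero_C, coeff_p_mul0] at this
    have hrec : ∀ n : ℕ, (PowerSeries.coeff n) g = c * (PowerSeries.coeff (n+1)) g := by
      intro n
      have := congrArg (PowerSeries.coeff (n+1)) hg
      rw [PowerSeries.coeff_C, if_neg (Nat.succ_ne_zero n), coeff_p_mul] at this
      have h1 : a * (PowerSeries.coeff n) g = a * (c * (PowerSeries.coeff (n+1)) g) := by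
        rw [← mul_assoc, hac]
        linear_combination -this
      exact mul_left_cancel₀ (by
        intro h; rw [h, zero_mul] at hab; exact zero_ne_one hab) h1
    have hpow : ∀ n : ℕ, (PowerSeries.coeff 0) g = c ^ n * (PowerSeries.coeff n) g := by
      intro n
      induction n with
      | zero => simp
      | succ k ih => rw [ih, hrec k, pow_succ]; ring
    have hnorm : ∀ n : ℕ, ‖(PowerSeries.coeff 0) g‖ ≤ ‖c‖ ^ n := by
      intro n
      rw [hpow n, norm_mul, norm_pow]
      exact mul_le_of_le_one_right (by positivity) (PadicInt.norm_le_one _)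
    have hg0 : (PowerSeries.coeff 0) g = 0 := by
      rw [← norm_eq_zero (a := (PowerSeries.coeff 0) g)]
      refine le_antisymm ?_ (norm_nonneg _)
      have := ge_of_tendsto (tendsto_pow_atTop_nhds_zero_of_lt_one hc0 hcnorm)
        (Filter.Eventually.of_forall hnorm)
      linarith
    rw [h0, hg0, mul_zero]
  have hsurj : Function.Surjective ψ := by
    intro y
    obtain ⟨f, rfl⟩ := Ideal.Quotient.mk_surjective y
    -- define g
    have hsum : ∀ n : ℕ, Summable (fun j : ℕ => (PowerSeries.coeff (n+j)) f * c ^ j) := by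
      intro n
      apply Summable.of_norm_bounded (summable_geometric_of_lt_one hc0 hcnorm)
      intro j
      rw [norm_mul, norm_pow]
      exact mul_le_of_le_one_left (by positivity) (PadicInt.norm_le_one _)
    set g : PowerSeries ℤ_[ℓ] :=
      PowerSeries.mk (fun n => b * ∑' j : ℕ, (PowerSeries.coeff (n+1+j)) f * c ^ j)
    have hgrec : ∀ n : ℕ, a * (PowerSeries.coeff n) g =
        (PowerSeries.coeff (n+1)) f - ℓ * (PowerSeries.coeff (n+1)) g := by
      intro n
      have hsplit := (hsum (n+1)).tsum_eq_zero_add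
      simp only [g, PowerSeries.coeff_mk, ← mul_assoc, hab, one_mul]
      rw [hsplit]
      have heq : (fun j : ℕ => (PowerSeries.coeff (n+1+(j+1))) f * c ^ (j+1))
          = fun j : ℕ => c * ((PowerSeries.coeff (n+1+1+j)) f * c ^ j) := by
        funext j
        have hnj : n + 1 + (j + 1) = n + 1 + 1 + j := by ring
        rw [hnj, pow_succ]; ring
      rw [heq, (hsum (n+1+1)).tsum_mul_left c]
      simp only [add_zero, pow_zero, mul_one]
      have hcb : c = -(b * ↑ℓ) := rfl
      linear_combination (∑' j : ℕ, (PowerSeries.coeff (n+1+1+j)) f * c ^ j) * hcb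
    -- f - p * g = C (f_0 - ℓ g_0)
    have key : f - p * g = PowerSeries.C
        ((PowerSeries.coeff 0) f - ℓ * (PowerSeries.coeff 0) g) := by
      ext n
      cases n with
      | zero => rw [map_sub, coeff_p_mul0, PowerSeries.coeff_zero_C]
      | succ k =>
        rw [map_sub, coeff_p_mul, PowerSeries.coeff_C, if_neg (Nat.succ_ne_zero k)]
        have := hgrec k
        linear_combination -this
    refine ⟨(PowerSeries.coeff 0) f - ℓ * (PowerSeries.coeff 0) g, ?_⟩
    show (Ideal.Quotient.mk I) (PowerSeries.C _) = _
    rw [← key]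
    rw [Ideal.Quotient.mk_eq_mk_iff_sub_mem]
    have hsub : f - p * g - f = -(p * g) := by ring
    rw [hsub]
    exact neg_mem (Ideal.mul_mem_right _ _ (Ideal.subset_span rfl))
  exact ⟨(RingEquiv.ofBijective ψ ⟨hinj, hsurj⟩).symm⟩
end

section
/- For every prime number ℓ and distinct units a and b of ℤ_ℓ, the ideal of ℤ_ℓ⟦X⟧ generated by ℓ + a·X is different from the ideal generated by ℓ + b·X. -/
open PowerSeries

theorem padic_zero_of_forall_pow_dvd {p : ℕ} [Fact (Nat.Prime p)] (x : ℤ_[p])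
    (h : ∀ k : ℕ, (p : ℤ_[p]) ^ k ∣ x) : x = 0 := by
  by_contra hx
  have h1 := (PadicInt.mem_span_pow_iff_le_valuation x hx (x.valuation + 1)).mp
    (Ideal.mem_span_singleton.mpr (h _))
  have h2 : 0 ≤ x.valuation := Nat.zero_le _
  omega

/-- For every prime number ℓ and distinct units `a` and `b` of ℤ_ℓ, the ideals of
ℤ_ℓ⟦X⟧ generated by `ℓ + a·X` and by `ℓ + b·X` are different. -/
theorem span_ell_add_aX_ne (ℓ : ℕ) [Fact (Nat.Prime ℓ)] (a b : ℤ_[ℓ])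
    (ha : IsUnit a) (hb : IsUnit b) (hab : a ≠ b) :
    Ideal.span {(ℓ : PowerSeries ℤ_[ℓ]) + PowerSeries.C (R := ℤ_[ℓ]) a * PowerSeries.X} ≠
      Ideal.span {(ℓ : PowerSeries ℤ_[ℓ]) + PowerSeries.C (R := ℤ_[ℓ]) b * PowerSeries.X} := by
  intro h
  rw [Ideal.span_singleton_eq_span_singleton] at h
  obtain ⟨u, hu⟩ := h
  set c : ℕ → ℤ_[ℓ] := fun n => PowerSeries.coeff (R := ℤ_[ℓ]) n (u : PowerSeries ℤ_[ℓ]) with hc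
  have hℓ : ((ℓ : PowerSeries ℤ_[ℓ])) = PowerSeries.C (R := ℤ_[ℓ]) (ℓ : ℤ_[ℓ]) := by
    simp [map_natCast]
  have hcoeff : ∀ n : ℕ, PowerSeries.coeff (R := ℤ_[ℓ]) n
      (((ℓ : PowerSeries ℤ_[ℓ]) + PowerSeries.C (R := ℤ_[ℓ]) a * PowerSeries.X) * (u : PowerSeries ℤ_[ℓ])) =
      PowerSeries.coeff (R := ℤ_[ℓ]) n ((ℓ : PowerSeries ℤ_[ℓ]) + PowerSeries.C (R := ℤ_[ℓ]) b * PowerSeries.X) := by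
    intro n; rw [hu]
  have key : ∀ n : ℕ, (ℓ : ℤ_[ℓ]) * c n + a * (if n = 0 then 0 else c (n-1)) =
      (if n = 0 then (ℓ : ℤ_[ℓ]) else 0) + (if n = 1 then b else 0) := by
    intro n
    have := hcoeff n
    rw [hℓ, add_mul, mul_comm (PowerSeries.C (R := ℤ_[ℓ]) a) PowerSeries.X,
      mul_assoc] at this
    cases n with
    | zero => simpa [hc, PowerSeries.coeff_zero_eq_constantCoeff] using this
    | succ m =>
      rw [map_add, map_add, PowerSeries.coeff_C_mul, PowerSeries.coeff_C_mul,
        PowerSeries.coeff_succ_X_mul] at this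
      simp only [PowerSeries.coeff_C, PowerSeries.coeff_X] at this
      simpa [Nat.succ_ne_zero] using this
  have h0 : (ℓ : ℤ_[ℓ]) * c 0 = ℓ := by simpa using key 0
  have hlne : (ℓ : ℤ_[ℓ]) ≠ 0 := by
    exact_mod_cast Nat.cast_ne_zero.mpr (Fact.out : Nat.Prime ℓ).ne_zero
  have hc0 : c 0 = 1 := mul_left_cancel₀ hlne (by rw [h0, mul_one])
  have h1 : (ℓ : ℤ_[ℓ]) * c 1 + a = b := by
    have := key 1
    simp [hc0] at this
    linear_combination this
  have hrec : ∀ n : ℕ, (ℓ : ℤ_[ℓ]) * c (n+2) + a * c (n+1) = 0 := by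
    intro n
    have := key (n+2)
    simpa using this
  -- for all k, ℓ^k divides c (n+1) for every n
  have hdvd : ∀ k : ℕ, ∀ n : ℕ, (ℓ : ℤ_[ℓ]) ^ k ∣ c (n+1) := by
    intro k
    induction k with
    | zero => intro n; simp
    | succ k ih =>
      intro n
      have h2 : (ℓ : ℤ_[ℓ]) ^ (k+1) ∣ a * c (n+1) := by
        have : a * c (n+1) = -((ℓ : ℤ_[ℓ]) * c (n+2)) := by linear_combination hrec n
        rw [this]
        obtain ⟨d, hd⟩ := ih (n+1)
        exact ⟨-d, by rw [hd]; ring⟩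
      exact (IsUnit.dvd_mul_left ha).mp h2
  have hc1 : c 1 = 0 := padic_zero_of_forall_pow_dvd _ (fun k => by
    have := hdvd k 0; simpa using this)
  apply hab
  rw [hc1, mul_zero, zero_add] at h1
  exact h1
end
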